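/- Let D be a real-valued random variable with E[D] = −δ for some δ > 0 and E[D²] < ∞, and set σ² := Var(D). Define V(x) := 1 + (2δ)⁻¹(x² + δx) for x ≥ 0. Then for every x ≥ 0, E[V(max(x + D, 0))] = V(x) − x + R(x), where R(x) := (2δ)⁻¹σ² − (2δ)⁻¹ E[((x+D)² + δ(x+D)) · 1{x + D < 0}], and moreover sup_{x ≥ 0} |R(x)| < ∞. -/

import Mathlib

open MeasureTheory ProbabilityTheory Filter
open scoped ENNReal

/-- **Proposition 3.2(i), identity (35).** For the reflected random walk with increment `D`
satisfying `E[D] = −δ < 0` and `E[D²] < ∞`, the Lyapunov function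
`V(x) = 1 + (2δ)⁻¹(x² + δx)` satisfies `PV(x) = V(x) − x + R(x)` with `R` bounded on `[0,∞)`,
where `R(x) = (2δ)⁻¹σ² − (2δ)⁻¹ E[((x+D)² + δ(x+D)) 1{x+D < 0}]` and `σ² = Var(D)`. -/
theorem reflected_rw_drift_identity {Ω : Type*} [MeasureSpace Ω]
    [IsProbabilityMeasure (ℙ : Measure Ω)]
    (D : Ω → ℝ) (hD : Measurable D) (hDint : Integrable D)
    (δ : ℝ) (hδ : 0 < δ) (hmean : (∫ ω, D ω) = -δ)
    (hDsq : Integrable (fun ω => (D ω) ^ 2))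
    (σ2 : ℝ) (hσ2 : σ2 = variance D ℙ)
    (V : ℝ → ℝ) (hVdef : ∀ x, V x = 1 + (2 * δ)⁻¹ * (x ^ 2 + δ * x))
    (R : ℝ → ℝ)
    (hRdef : ∀ x, R x = (2 * δ)⁻¹ * σ2 -
      (2 * δ)⁻¹ * ∫ ω, (if x + D ω < 0 then (x + D ω) ^ 2 + δ * (x + D ω) else 0)) :
    (∀ x : ℝ, 0 ≤ x → (∫ ω, V (max (x + D ω) 0)) = V x - x + R x) ∧
      ∃ M : ℝ, ∀ x : ℝ, 0 ≤ x → |R x| ≤ M := by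
  have hδ' : (2 : ℝ) * δ ≠ 0 := by positivity
  -- dominating function
  set g : Ω → ℝ := fun ω => (D ω) ^ 2 + δ * |D ω| with hg
  have hgint : Integrable g := hDsq.add (hDint.abs.const_mul δ)
  -- variance formula
  have hmem : MemLp D 2 (ℙ : Measure Ω) :=
    (memLp_two_iff_integrable_sq hD.aestronglyMeasurable).2 hDsq
  have hEDsq : (∫ ω, (D ω) ^ 2) = σ2 + δ ^ 2 := by
    have := variance_eq_sub (μ := (ℙ : Measure Ω)) hmem
    rw [hσ2, this]
    simp only [Pi.pow_apply]
    rw [hmean]; ring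
  -- the truncated term, per x
  have hf : ∀ x : ℝ, 0 ≤ x →
      Integrable (fun ω => if x + D ω < 0 then (x + D ω) ^ 2 + δ * (x + D ω) else 0)
      ∧ ∀ ω, |if x + D ω < 0 then (x + D ω) ^ 2 + δ * (x + D ω) else 0| ≤ g ω := by
    intro x hx
    have hbound : ∀ ω, |if x + D ω < 0 then (x + D ω) ^ 2 + δ * (x + D ω) else 0| ≤ g ω := by
      intro ω
      by_cases h : x + D ω < 0
      · simp only [h, if_pos]
        have hy : -(x + D ω) ≤ |D ω| := le_trans (by linarith) (neg_le_abs (D ω))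
        have hy0 : 0 ≤ -(x + D ω) := by linarith
        have hsq : (x + D ω) ^ 2 ≤ (D ω) ^ 2 := by
          nlinarith [sq_abs (D ω), abs_nonneg (D ω)]
        have habs : |(x + D ω) ^ 2 + δ * (x + D ω)| ≤ (x + D ω) ^ 2 + δ * (-(x + D ω)) := by
          rw [abs_le]; constructor <;> nlinarith [sq_nonneg (x + D ω)]
        calc |(x + D ω) ^ 2 + δ * (x + D ω)| ≤ (x + D ω) ^ 2 + δ * (-(x + D ω)) := habs
          _ ≤ (D ω) ^ 2 + δ * |D ω| := by nlinarith
      · simp only [h, if_neg, not_false_iff, abs_zero]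
        positivity
    refine ⟨?_, hbound⟩
    have hmeas : Measurable (fun ω => if x + D ω < 0 then (x + D ω) ^ 2 + δ * (x + D ω) else 0) := by
      exact Measurable.ite (measurableSet_lt (by fun_prop) measurable_const)
        (by fun_prop) measurable_const
    exact hgint.mono hmeas.aestronglyMeasurable (Filter.Eventually.of_forall fun ω => by
      simpa [Real.norm_eq_abs, abs_of_nonneg (by positivity : (0:ℝ) ≤ g ω)] using hbound ω)
  constructor
  · intro x hx
    set f : Ω → ℝ := fun ω => if x + D ω < 0 then (x + D ω) ^ 2 + δ * (x + D ω) else 0 with hfdef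
    obtain ⟨hfint, _⟩ := hf x hx
    set h : Ω → ℝ := fun ω => (x + D ω) ^ 2 + δ * (x + D ω) with hhdef
    have hhint : Integrable h := by
      have : h = fun ω => (x ^ 2 + δ * x) + ((2 * x + δ) * D ω + D ω ^ 2) := by
        funext ω; simp only [hhdef]; ring
      rw [this]
      exact (integrable_const _).add ((hDint.const_mul _).add hDsq)
    have hEh : (∫ ω, h ω) = x ^ 2 + δ * x - 2 * δ * x + σ2 := by
      have h1 : Integrable (fun ω => (2 * x + δ) * D ω + D ω ^ 2) :=
        (hDint.const_mul _).add hDsq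
      have h2 : Integrable (fun ω => (2 * x + δ) * D ω) := hDint.const_mul _
      have : (∫ ω, h ω) = ∫ ω, ((x ^ 2 + δ * x) + ((2 * x + δ) * D ω + D ω ^ 2)) := by
        congr 1; funext ω; simp only [hhdef]; ring
      rw [this, integral_add (integrable_const _) h1,
        integral_add h2 hDsq, integral_const_mul, hmean, hEDsq, integral_const]
      simp; ring
    have hpt : ∀ ω, V (max (x + D ω) 0) = 1 + (2 * δ)⁻¹ * (h ω - f ω) := by
      intro ω
      rw [hVdef]
      by_cases hc : x + D ω < 0
      · have : max (x + D ω) 0 = 0 := max_eq_right hc.le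
        simp only [this, hfdef, hhdef, if_pos hc]; ring
      · have : max (x + D ω) 0 = x + D ω := max_eq_left (not_lt.1 hc)
        simp only [this, hfdef, hhdef, if_neg hc]; ring
    calc (∫ ω, V (max (x + D ω) 0)) = ∫ ω, (1 + (2 * δ)⁻¹ * (h ω - f ω)) := by
          congr 1; funext ω; exact hpt ω
      _ = 1 + (2 * δ)⁻¹ * ((∫ ω, h ω) - ∫ ω, f ω) := by
          have h3 : Integrable (fun ω => (2 * δ)⁻¹ * (h ω - f ω)) :=
            (hhint.sub hfint).const_mul _
          rw [integral_add (integrable_const _) h3, integral_const_mul,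
            integral_sub hhint hfint]
          simp
          exact Or.inl rfl
      _ = V x - x + R x := by
          rw [hEh, hVdef, hRdef]
          change _ = _ - _ + ((2 * δ)⁻¹ * σ2 - (2 * δ)⁻¹ * ∫ ω, f ω)
          field_simp
          ring
  · refine ⟨(2 * δ)⁻¹ * |σ2| + (2 * δ)⁻¹ * ∫ ω, g ω, fun x hx => ?_⟩
    obtain ⟨hfint, hbound⟩ := hf x hx
    rw [hRdef]
    have hIg : |∫ ω, (if x + D ω < 0 then (x + D ω) ^ 2 + δ * (x + D ω) else 0)| ≤ ∫ ω, g ω := by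
      calc |∫ ω, (if x + D ω < 0 then (x + D ω) ^ 2 + δ * (x + D ω) else 0)|
          ≤ ∫ ω, |if x + D ω < 0 then (x + D ω) ^ 2 + δ * (x + D ω) else 0| :=
            by simpa [Real.norm_eq_abs] using
              norm_integral_le_integral_norm
                (fun ω => if x + D ω < 0 then (x + D ω) ^ 2 + δ * (x + D ω) else 0)
        _ ≤ ∫ ω, g ω := integral_mono hfint.abs hgint hbound
    have h2δ : (0:ℝ) ≤ (2 * δ)⁻¹ := by positivity
    calc |(2 * δ)⁻¹ * σ2 - (2 * δ)⁻¹ * ∫ ω, (if x + D ω < 0 then (x + D ω) ^ 2 + δ * (x + D ω) else 0)|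
        ≤ |(2 * δ)⁻¹ * σ2| + |(2 * δ)⁻¹ * ∫ ω, (if x + D ω < 0 then (x + D ω) ^ 2 + δ * (x + D ω) else 0)| :=
          abs_sub _ _
      _ ≤ (2 * δ)⁻¹ * |σ2| + (2 * δ)⁻¹ * ∫ ω, g ω := by
          rw [abs_mul, abs_mul, abs_of_nonneg h2δ]
          gcongr
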